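/- For any Hessenberg function h, the ideal I_h equals its antidiagonal subideal I_h^{AD} = ⟨ e_{h_i - (i-1)}(x_1,...,x_{h_i}) : i = 1,...,n ⟩; that is, I_h is generated by just the n antidiagonal generators. -/

import Mathlib

open MvPolynomial

/-- The index set of variables `x_a, x_{a+1}, ..., x_b` (1-indexed) among `x_1, ..., x_n`. -/
def seg (n a b : ℕ) : Finset (Fin n) :=
  Finset.univ.filter fun i => a ≤ (i : ℕ) + 1 ∧ (i : ℕ) + 1 ≤ b

/-- Truncated elementary symmetric polynomial of degree `d` in the variables indexed by `S`. -/
noncomputable def ee (n : ℕ) (d : ℤ) (S : Finset (Fin n)) : MvPolynomial (Fin n) ℤ :=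
  if 0 ≤ d then ∑ A ∈ S.powersetCard d.toNat, ∏ i ∈ A, X i else 0

/-- Truncated complete homogeneous symmetric polynomial of degree `d` in variables indexed by `S`. -/
noncomputable def te (n : ℕ) (d : ℤ) (S : Finset (Fin n)) : MvPolynomial (Fin n) ℤ :=
  if 0 ≤ d then ∑ m ∈ S.sym d.toNat, ((m : Multiset (Fin n)).map X).prod else 0

lemma seg_eq (n m : ℕ) : seg n 1 m = Finset.univ.filter fun i : Fin n => (i : ℕ) < m := by
  unfold seg
  ext i
  simp only [Finset.mem_filter, Finset.mem_univ, true_and]; omega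

lemma seg_card (n m : ℕ) (hm : m ≤ n) : (seg n 1 m).card = m := by
  rw [seg_eq]
  rw [show (Finset.univ.filter fun i : Fin n => (i : ℕ) < m) =
      (Finset.range m).attachFin (fun x hx => lt_of_lt_of_le (Finset.mem_range.mp hx) hm) from ?_]
  · rw [Finset.card_attachFin, Finset.card_range]
  · ext i; simp

lemma seg_insert (n m : ℕ) (hm : m < n) :
    seg n 1 (m + 1) = insert ⟨m, hm⟩ (seg n 1 m) := by
  rw [seg_eq, seg_eq]
  ext i
  simp only [Finset.mem_filter, Finset.mem_univ, true_and, Finset.mem_insert, Fin.ext_iff]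
  omega

lemma notmem_seg (n m : ℕ) (hm : m < n) : (⟨m, hm⟩ : Fin n) ∉ seg n 1 m := by
  rw [seg_eq]; simp

lemma ee_neg (n : ℕ) (d : ℤ) (S : Finset (Fin n)) (hd : d < 0) : ee n d S = 0 := by
  rw [ee, if_neg (by omega)]

lemma ee_big (n : ℕ) (d : ℤ) (S : Finset (Fin n)) (hd : (S.card : ℤ) < d) :
    ee n d S = 0 := by
  have h0 : 0 ≤ d := le_trans (Int.ofNat_nonneg _) (le_of_lt hd)
  rw [ee, if_pos h0, Finset.powersetCard_eq_empty.mpr (by omega), Finset.sum_empty]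

lemma ee_rec (n : ℕ) (d : ℤ) (m : ℕ) (hm : m < n) :
    ee n d (seg n 1 (m + 1)) =
      ee n d (seg n 1 m) + X ⟨m, hm⟩ * ee n (d - 1) (seg n 1 m) := by
  rcases lt_trichotomy d 0 with hd | hd | hd
  · rw [ee_neg _ _ _ hd, ee_neg _ _ _ hd, ee_neg _ _ _ (by omega)]; ring
  · subst hd
    rw [ee_neg n (0 - 1) _ (by omega)]
    simp [ee]
  · have h0 : (0:ℤ) ≤ d := le_of_lt hd
    have h1 : (0:ℤ) ≤ d - 1 := by omega
    obtain ⟨e, he⟩ : ∃ e : ℕ, d.toNat = e + 1 := ⟨(d-1).toNat, by omega⟩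
    have he' : (d - 1).toNat = e := by omega
    rw [ee, ee, ee, if_pos h0, if_pos h0, if_pos h1, he, he',
      seg_insert n m hm, Finset.powersetCard_succ_insert (notmem_seg n m hm),
      Finset.sum_union]
    · congr 1
      rw [Finset.sum_image ?inj]
      case inj =>
        intro A hA B hB hAB
        have hA' : (⟨m, hm⟩ : Fin n) ∉ A := fun hc =>
          notmem_seg n m hm ((Finset.mem_powersetCard.mp hA).1 hc)
        have hB' : (⟨m, hm⟩ : Fin n) ∉ B := fun hc =>
          notmem_seg n m hm ((Finset.mem_powersetCard.mp hB).1 hc)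
        rw [← Finset.erase_insert hA', ← Finset.erase_insert hB', hAB]
      rw [Finset.mul_sum]
      refine Finset.sum_congr rfl fun A hA => ?_
      have hA' : (⟨m, hm⟩ : Fin n) ∉ A := fun hc =>
        notmem_seg n m hm ((Finset.mem_powersetCard.mp hA).1 hc)
      rw [Finset.prod_insert hA']
    · rw [Finset.disjoint_left]
      intro A hA hA'
      obtain ⟨B, hB, rfl⟩ := Finset.mem_image.mp hA'
      exact notmem_seg n m hm
        ((Finset.mem_powersetCard.mp hA).1 (Finset.mem_insert_self _ _))

theorem stmt16 (n : ℕ) (hn : 0 < n) (h : Fin n → ℕ)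
    (hh1 : ∀ i : Fin n, (i : ℕ) + 1 ≤ h i ∧ h i ≤ n)
    (hh2 : ∀ i j : Fin n, i ≤ j → h i ≤ h j) :
    Ideal.span {p : MvPolynomial (Fin n) ℤ |
        ∃ i : Fin n, ∃ r : ℕ, r ≤ (i : ℕ) ∧ p = ee n ((h i : ℤ) - r) (seg n 1 (h i))} =
      Ideal.span
        (Set.range fun i : Fin n => ee n ((h i : ℤ) - (i : ℕ)) (seg n 1 (h i))) := by
  set J := Ideal.span
      (Set.range fun i : Fin n => ee n ((h i : ℤ) - (i : ℕ)) (seg n 1 (h i))) with hJ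
  -- key claim: every generator lies in J
  have key : ∀ k : ℕ, ∀ hk : k < n, ∀ r : ℕ, r ≤ k →
      ee n ((h ⟨k, hk⟩ : ℤ) - r) (seg n 1 (h ⟨k, hk⟩)) ∈ J := by
    intro k
    induction k with
    | zero =>
      intro hk r hr
      interval_cases r
      exact Ideal.subset_span ⟨⟨0, hk⟩, rfl⟩
    | succ k ih =>
      intro hk r hr
      rcases Nat.eq_or_lt_of_le hr with rfl | hrk
      · exact Ideal.subset_span ⟨⟨k + 1, hk⟩, rfl⟩
      have hrk : r ≤ k := by omega
      set i : Fin n := ⟨k + 1, hk⟩ with hi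
      set i' : Fin n := ⟨k, by omega⟩ with hi'
      have hi'1 : k + 1 ≤ h i' := (hh1 i').1
      have hi1 : k + 2 ≤ h i := (hh1 i).1
      have ih' : ∀ r' : ℕ, r' ≤ k → ee n ((h i' : ℤ) - r') (seg n 1 (h i')) ∈ J :=
        fun r' hr' => ih i'.isLt r' hr'
      -- inner induction: for h i' ≤ m ≤ h i, all ee n d (seg n 1 m) with m - k ≤ d are in J
      have inner : ∀ m, h i' ≤ m → m ≤ h i → ∀ d : ℤ, (m : ℤ) - k ≤ d →
          ee n d (seg n 1 m) ∈ J := by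
        intro m hm
        induction m, hm using Nat.le_induction with
        | base =>
          intro _ d hd
          rcases le_or_gt d (h i') with hdle | hdgt
          · -- it is a generator at index i'
            have hd0 : (1:ℤ) ≤ d := by omega
            obtain ⟨r', hr', hdr⟩ : ∃ r' : ℕ, r' ≤ k ∧ d = (h i' : ℤ) - r' :=
              ⟨h i' - d.toNat, by omega, by omega⟩
            rw [hdr]
            exact ih' r' hr'
          · rw [ee_big n d _ (by rw [seg_card n _ (hh1 i').2]; exact hdgt)]
            exact J.zero_mem
        | succ m hm ihm =>
          intro hm1 d hd
          have hmn : m < n := lt_of_lt_of_le hm1 (hh1 i).2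
          rw [ee_rec n d m hmn]
          exact J.add_mem (ihm (by omega) d (by omega))
            (J.mul_mem_left _ (ihm (by omega) (d - 1) (by omega)))
      exact inner (h i) (hh2 i' i (by simp [hi, hi', Fin.le_def])) le_rfl
        ((h i : ℤ) - r) (by omega)
  apply le_antisymm
  · rw [Ideal.span_le]
    rintro p ⟨i, r, hr, rfl⟩
    exact key i.val i.isLt r hr
  · apply Ideal.span_mono
    rintro p ⟨i, rfl⟩
    exact ⟨i, i.val, le_rfl, rfl⟩
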